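/- Let π be a feasible potential for a finite graph G with nonnegative weights w, let S ⊆ V contain no edge of G inside it, and let ε ≥ 0 satisfy ε ≤ w_π(e) for every edge e connecting S to V \ S \ Γ_π(S), and ε ≤ π(v) for every v ∈ S. Define π'(v) = π(v) − ε for v ∈ S, π'(v) = π(v) + ε for v ∈ Γ_π(S), and π'(v) = π(v) otherwise. Then π' is a feasible potential and Σ_v π'(v) = Σ_v π(v) + (|Γ_π(S)| − |S|)·ε. -/
import Mathlib


open Finset

def IsGraph {V : Type*} (G : Finset (Finset V)) : Prop := ∀ e ∈ G, e.card = 2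

open scoped Classical in
/-- `Γ_π(S)`: the vertices outside `S` joined to a vertex of `S` by a tight edge. -/
noncomputable def tightNbhd {V : Type*} [DecidableEq V]
    (G : Finset (Finset V)) (w : Finset V → ℝ) (π : V → ℝ) (S : Finset V) : Finset V :=
  (G.biUnion id).filter
    (fun v => v ∉ S ∧ ∃ e ∈ G, v ∈ e ∧ (∑ x ∈ e, π x) = w e ∧ ∃ u ∈ e, u ∈ S)

/-- **Primal-dual adjustment.** Lowering the potential by `ε` on `S` and raising it by `ε`
on `Γ_π(S)` preserves feasibility, and changes the total potential by
`(|Γ_π(S)| − |S|)·ε`. -/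
theorem primal_dual_adjustment
    {V : Type*} [DecidableEq V]
    (G : Finset (Finset V)) (hG : IsGraph G) (w : Finset V → ℝ)
    (hw : ∀ e ∈ G, 0 ≤ w e)
    (π : V → ℝ)
    (hfeas_edge : ∀ e ∈ G, w e ≤ ∑ v ∈ e, π v)
    (hfeas_nonneg : ∀ v ∈ G.biUnion id, 0 ≤ π v)
    (S : Finset V) (hSV : S ⊆ G.biUnion id)
    (hS_no_edge : ∀ e ∈ G, ¬ e ⊆ S)
    (ε : ℝ) (hε0 : 0 ≤ ε)
    (hε_slack : ∀ e ∈ G, (∃ u ∈ e, u ∈ S) →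
      (∃ v ∈ e, v ∉ S ∧ v ∉ tightNbhd G w π S) →
      ε ≤ (∑ x ∈ e, π x) - w e)
    (hε_pot : ∀ v ∈ S, ε ≤ π v)
    (π' : V → ℝ)
    (hπ' : ∀ v, π' v =
      if v ∈ S then π v - ε else if v ∈ tightNbhd G w π S then π v + ε else π v) :
    (∀ e ∈ G, w e ≤ ∑ v ∈ e, π' v) ∧ (∀ v ∈ G.biUnion id, 0 ≤ π' v) ∧
      ∑ v ∈ G.biUnion id, π' v =
        ∑ v ∈ G.biUnion id, π v + (((tightNbhd G w π S).card : ℝ) - S.card) * ε := by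
  classical
  have hTS : ∀ v ∈ tightNbhd G w π S, v ∉ S := by
    intro v hv
    unfold tightNbhd at hv
    exact (Finset.mem_filter.mp hv).2.1
  have hTV : tightNbhd G w π S ⊆ G.biUnion id := by
    intro v hv; unfold tightNbhd at hv; exact (Finset.mem_filter.mp hv).1
  refine ⟨?_, ?_, ?_⟩
  · intro e he
    obtain ⟨u, v, huv, rfl⟩ := Finset.card_eq_two.mp (hG e he)
    have hsum : (∑ x ∈ ({u,v} : Finset V), π x) = π u + π v := Finset.sum_pair huv
    rw [Finset.sum_pair huv]
    have hnb : ¬ (u ∈ S ∧ v ∈ S) := by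
      rintro ⟨h1, h2⟩
      refine hS_no_edge _ he ?_
      intro x hx
      rcases Finset.mem_insert.mp hx with rfl | hx
      · exact h1
      · rw [Finset.mem_singleton.mp hx]; exact h2
    by_cases huS : u ∈ S
    · have hvS : v ∉ S := fun h => hnb ⟨huS, h⟩
      rw [hπ' u, hπ' v, if_pos huS, if_neg hvS]
      by_cases hvT : v ∈ tightNbhd G w π S
      · rw [if_pos hvT]
        have := hfeas_edge _ he; rw [hsum] at this; linarith
      · rw [if_neg hvT]
        have := hε_slack _ he ⟨u, by simp, huS⟩ ⟨v, by simp, hvS, hvT⟩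
        rw [hsum] at this; linarith
    · by_cases hvS : v ∈ S
      · rw [hπ' u, hπ' v, if_neg huS, if_pos hvS]
        by_cases huT : u ∈ tightNbhd G w π S
        · rw [if_pos huT]; have := hfeas_edge _ he; rw [hsum] at this; linarith
        · rw [if_neg huT]
          have := hε_slack _ he ⟨v, by simp, hvS⟩ ⟨u, by simp, huS, huT⟩
          rw [hsum] at this; linarith
      · have h1 : π u ≤ π' u := by rw [hπ' u, if_neg huS]; split <;> linarith
        have h2 : π v ≤ π' v := by rw [hπ' v, if_neg hvS]; split <;> linarith
        have := hfeas_edge _ he; rw [hsum] at this; linarith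
  · intro v hv
    rw [hπ' v]
    split
    · have := hε_pot v ‹_›; linarith
    · split
      · linarith [hfeas_nonneg v hv]
      · exact hfeas_nonneg v hv
  · have key : ∀ v ∈ G.biUnion id, π' v =
        π v + ((if v ∈ tightNbhd G w π S then ε else 0) + (if v ∈ S then -ε else 0)) := by
      intro v hv
      rw [hπ' v]
      by_cases hS' : v ∈ S
      · rw [if_pos hS', if_pos hS', if_neg (fun h => hTS v h hS')]; ring
      · rw [if_neg hS', if_neg hS']
        split <;> ring
    rw [Finset.sum_congr rfl key, Finset.sum_add_distrib, Finset.sum_add_distrib,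
      Finset.sum_ite_mem, Finset.sum_ite_mem, Finset.inter_eq_right.mpr hTV,
      Finset.inter_eq_right.mpr hSV, Finset.sum_const, Finset.sum_const,
      nsmul_eq_mul, nsmul_eq_mul]
    ring
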